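/- Let (W, M, s, m) be a hiring problem and k a parameter with k ≤ |W| and |M| ≥ ⌈m·k⌉. Then the Brazilian rule φ^B with parameter k is aggregation independent and respects minority rights: (i) for all quotas q ≥ q₁ ≥ 0 with m·q₁ and m·q integers, and any set A of workers previously hired by φ^B with |A| + q ≤ k, φ^B hiring q workers at once selects the same workers as hiring q₁ and then q − q₁; and (ii) for every sequence of hires λ = ⟨q₁,…,q_t⟩ with m·q_r an integer for each r and q₁+⋯+q_t ≤ k, the set φ^B(W,λ) respects minority rights for quota q₁+⋯+q_t. -/

import Mathlib

open Finset

variable {ι : Type*} [DecidableEq ι]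

/-- The (up to) `k` highest-scoring elements of `X`, chosen greedily
(with injective scores this is the set of the `k` highest-scoring elements). -/
noncomputable def topOf (s : ι → ℝ) : ℕ → Finset ι → Finset ι
  | 0, _ => ∅
  | k + 1, X =>
    if h : X.Nonempty then
      insert (X.exists_max_image s h).choose
        (topOf s k (X.erase (X.exists_max_image s h).choose))
    else ∅

/-- `H` respects minority rights for quota `q` (w.r.t. minorities `M` and ratio `m`):
either `|M| ≥ m·q` and the fraction of minorities in `H` is at least `m`
(stated multiplicatively as `ω(H) ≥ m·|H|`), or `|M| < m·q` and `M ⊆ H`. -/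
def RespectsRightsSet (M : Finset ι) (m : ℝ) (q : ℕ) (H : Finset ι) : Prop :=
  (m * (q : ℝ) ≤ (M.card : ℝ) ∧ m * (H.card : ℝ) ≤ ((H ∩ M).card : ℝ)) ∨
  ((M.card : ℝ) < m * (q : ℝ) ∧ M ⊆ H)

/-- `H` is minority fair (w.r.t. workers `W`, minorities `M`, scores `s`, ratio `m`):
(i) within `M` and within `W ∖ M` selection follows the scores; (ii) no minority with a
higher score is left out while a non-minority is hired; (iii) a lower-scoring minority is
hired over a higher-scoring non-minority only if the minority fraction of `H` is at most
`m` (stated multiplicatively as `ω(H) ≤ m·|H|`). -/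
def MinorityFairSet (W M : Finset ι) (s : ι → ℝ) (m : ℝ) (H : Finset ι) : Prop :=
  (∀ w ∈ M, ∀ w' ∈ M, w ∈ H → w' ∉ H → s w' < s w) ∧
  (∀ w ∈ W \ M, ∀ w' ∈ W \ M, w ∈ H → w' ∉ H → s w' < s w) ∧
  (∀ w ∈ W \ M, ∀ w' ∈ M, s w < s w' → w ∈ H → w' ∈ H) ∧
  ((∃ w ∈ W \ M, ∃ w' ∈ M, s w' < s w ∧ w ∉ H ∧ w' ∈ H) →
    ((H ∩ M).card : ℝ) ≤ m * (H.card : ℝ))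

lemma topOf_zero (s : ι → ℝ) (X : Finset ι) : topOf s 0 X = ∅ := rfl

lemma topOf_empty (s : ι → ℝ) (n : ℕ) : topOf s n (∅ : Finset ι) = ∅ := by
  cases n <;> simp [topOf]

lemma topOf_subset (s : ι → ℝ) (n : ℕ) (X : Finset ι) : topOf s n X ⊆ X := by
  induction n generalizing X with
  | zero => simp [topOf]
  | succ k ih =>
    by_cases h : X.Nonempty
    · rw [topOf, dif_pos h]
      refine insert_subset (X.exists_max_image s h).choose_spec.1 ?_
      exact (ih _).trans (erase_subset _ _)
    · rw [topOf, dif_neg h]; simp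

lemma topOf_card_le (s : ι → ℝ) (n : ℕ) (X : Finset ι) : (topOf s n X).card ≤ n := by
  induction n generalizing X with
  | zero => simp [topOf]
  | succ k ih =>
    by_cases h : X.Nonempty
    · rw [topOf, dif_pos h]
      exact (card_insert_le _ _).trans (Nat.succ_le_succ (ih _))
    · rw [topOf, dif_neg h]; simp

lemma card_topOf (s : ι → ℝ) (n : ℕ) (X : Finset ι) (hn : n ≤ X.card) :
    (topOf s n X).card = n := by
  induction n generalizing X with
  | zero => simp [topOf]
  | succ k ih =>
    have h : X.Nonempty := card_pos.mp (by omega)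
    rw [topOf, dif_pos h]
    have hx : (X.exists_max_image s h).choose ∈ X := (X.exists_max_image s h).choose_spec.1
    have hnot : (X.exists_max_image s h).choose ∉ topOf s k (X.erase (X.exists_max_image s h).choose) :=
      fun hc => (mem_erase.mp (topOf_subset _ _ _ hc)).1 rfl
    rw [card_insert_of_notMem hnot, ih]
    rw [card_erase_of_mem hx]; omega

lemma topOf_add (s : ι → ℝ) (a b : ℕ) (X : Finset ι) :
    topOf s (a + b) X = topOf s a X ∪ topOf s b (X \ topOf s a X) := by
  induction a generalizing X with
  | zero => simp [topOf]
  | succ k ih =>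
    by_cases h : X.Nonempty
    · set x := (X.exists_max_image s h).choose with hxdef
      have hsd : ∀ T : Finset ι, X \ insert x T = (X.erase x) \ T := by
        intro T; ext w
        simp only [mem_sdiff, mem_erase, mem_insert, not_or]
        tauto
      have harith : k + 1 + b = (k + b) + 1 := by omega
      rw [harith, topOf, dif_pos h, topOf, dif_pos h, ih, hsd, insert_union]
    · have hX : X = ∅ := not_nonempty_iff_eq_empty.mp h
      subst hX
      simp [topOf_empty]

/-- Auxiliary recursion for the Brazilian rule: `TM` and `O` are the two fixed groups,
`A` is the set of workers hired in earlier rounds.  In a round with quota `q`, the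
`⌈m·q⌉` highest-scoring not-yet-hired workers of `TM` and the `q − ⌈m·q⌉`
highest-scoring not-yet-hired workers of `O` are hired. -/
noncomputable def phiBaux (s : ι → ℝ) (m : ℝ) (TM O : Finset ι) :
    Finset ι → List ℕ → Finset ι
  | _, [] => ∅
  | A, q :: rest =>
    let H := topOf s ⌈m * (q : ℝ)⌉₊ (TM \ A) ∪ topOf s (q - ⌈m * (q : ℝ)⌉₊) (O \ A)
    H ∪ phiBaux s m TM O (A ∪ H) rest

/-- The Brazilian rule `φ^B` with parameter `k`: first form `TM`, the `⌈m·k⌉`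
highest-scoring workers of `M`, and `O`, the `k − ⌈m·k⌉` highest-scoring workers of
`W ∖ TM`; then hire round by round from `TM` and `O`, starting from the set `A` of
previously hired workers. -/
noncomputable def phiB (W M : Finset ι) (s : ι → ℝ) (m : ℝ) (k : ℕ)
    (A : Finset ι) (lam : List ℕ) : Finset ι :=
  phiBaux s m (topOf s ⌈m * (k : ℝ)⌉₊ M)
    (topOf s (k - ⌈m * (k : ℝ)⌉₊) (W \ topOf s ⌈m * (k : ℝ)⌉₊ M)) A lam

lemma phiBaux_disjoint (s : ι → ℝ) (m : ℝ) (TM O : Finset ι) :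
    ∀ (lam : List ℕ) (A : Finset ι), Disjoint (phiBaux s m TM O A lam) A := by
  intro lam
  induction lam with
  | nil => intro A; simp [phiBaux]
  | cons q rest ih =>
    intro A
    rw [phiBaux]
    refine disjoint_union_left.mpr ⟨disjoint_union_left.mpr ⟨?_, ?_⟩, ?_⟩
    · exact sdiff_disjoint.mono_left (topOf_subset _ _ _)
    · exact sdiff_disjoint.mono_left (topOf_subset _ _ _)
    · exact (ih _).mono_right subset_union_left

lemma phiBaux_shape (s : ι → ℝ) (m : ℝ) (TM O : Finset ι) (hTMO : Disjoint TM O) :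
    ∀ (lam : List ℕ) (a b : ℕ),
      (topOf s a TM ∪ topOf s b O) ∪ phiBaux s m TM O (topOf s a TM ∪ topOf s b O) lam =
        topOf s (a + (lam.map fun q : ℕ => ⌈m * (q : ℝ)⌉₊).sum) TM ∪
        topOf s (b + (lam.map fun q : ℕ => (q - ⌈m * (q : ℝ)⌉₊ : ℕ)).sum) O := by
  intro lam
  induction lam with
  | nil => intro a b; simp [phiBaux]
  | cons q rest ih =>
    intro a b
    set c := ⌈m * (q : ℝ)⌉₊ with hc
    set d := (q - ⌈m * (q : ℝ)⌉₊ : ℕ) with hd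
    have hTA : TM \ (topOf s a TM ∪ topOf s b O) = TM \ topOf s a TM := by
      ext w
      simp only [mem_sdiff, mem_union, not_or]
      refine ⟨fun hw => ⟨hw.1, hw.2.1⟩, fun hw => ⟨hw.1, hw.2, fun hwO => ?_⟩⟩
      exact (disjoint_left.mp hTMO hw.1) (topOf_subset _ _ _ hwO)
    have hOA : O \ (topOf s a TM ∪ topOf s b O) = O \ topOf s b O := by
      ext w
      simp only [mem_sdiff, mem_union, not_or]
      refine ⟨fun hw => ⟨hw.1, hw.2.2⟩, fun hw => ⟨hw.1, fun hwT => ?_, hw.2⟩⟩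
      exact (disjoint_right.mp hTMO hw.1) (topOf_subset _ _ _ hwT)
    have key : (topOf s a TM ∪ topOf s b O) ∪
        (topOf s c (TM \ (topOf s a TM ∪ topOf s b O)) ∪
         topOf s d (O \ (topOf s a TM ∪ topOf s b O))) =
        topOf s (a + c) TM ∪ topOf s (b + d) O := by
      rw [hTA, hOA, topOf_add s a c TM, topOf_add s b d O]
      ac_rfl
    rw [phiBaux, ← union_assoc, key, ih (a + c) (b + d), List.map_cons, List.map_cons,
      List.sum_cons, List.sum_cons, ← hc, ← hd, Nat.add_assoc, Nat.add_assoc]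

/-- Let `(W, M, s, m)` be a hiring problem and `k` a parameter with
`k ≤ |W|` and `|M| ≥ ⌈m·k⌉`.  Then the Brazilian rule `φ^B` with parameter `k` is
aggregation independent and respects minority rights: (i) for all quotas `q ≥ q₁ ≥ 0`
with `m·q₁` and `m·q` integers, and any set `A` of workers previously hired by `φ^B`
with `|A| + q ≤ k`, hiring `q` workers at once selects the same workers as hiring `q₁`
and then `q − q₁`; and (ii) for every sequence of hires `λ = ⟨q₁,…,q_t⟩` with `m·q_r` an
integer for each `r` and `q₁+⋯+q_t ≤ k`, the set `φ^B(W,λ)` respects minority rights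
for quota `q₁+⋯+q_t`. -/
theorem phiB_aggindep_and_rights (W M : Finset ι) (s : ι → ℝ) (m : ℝ) (k : ℕ)
    (hMW : M ⊆ W) (hs : Set.InjOn s ↑W) (hm0 : 0 ≤ m) (hm1 : m ≤ 1)
    (hk : k ≤ W.card) (hMk : ⌈m * (k : ℝ)⌉₊ ≤ M.card) :
    (∀ (q q₁ : ℕ) (A : Finset ι), q₁ ≤ q →
      (∃ j : ℕ, m * (q₁ : ℝ) = (j : ℝ)) → (∃ j : ℕ, m * (q : ℝ) = (j : ℝ)) →
      (∃ lam₀ : List ℕ, A = phiB W M s m k ∅ lam₀) → A.card + q ≤ k →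
      phiB W M s m k A [q] = phiB W M s m k A [q₁, q - q₁]) ∧
    (∀ lam : List ℕ, (∀ q ∈ lam, ∃ j : ℕ, m * (q : ℝ) = (j : ℝ)) → lam.sum ≤ k →
      RespectsRightsSet M m lam.sum (phiB W M s m k ∅ lam)) := by
  set TM := topOf s ⌈m * (k : ℝ)⌉₊ M with hTM
  set O := topOf s (k - ⌈m * (k : ℝ)⌉₊) (W \ TM) with hO
  have hTMO : Disjoint TM O := disjoint_sdiff.mono_right (topOf_subset _ _ _)
  have hphiB : ∀ (A : Finset ι) (lam : List ℕ),
      phiB W M s m k A lam = phiBaux s m TM O A lam := by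
    intro A lam; rw [phiB, ← hTM, ← hO]
  have shape0 : ∀ lam : List ℕ, phiBaux s m TM O ∅ lam =
      topOf s ((lam.map fun q : ℕ => ⌈m * (q : ℝ)⌉₊).sum) TM ∪
      topOf s ((lam.map fun q : ℕ => (q - ⌈m * (q : ℝ)⌉₊ : ℕ)).sum) O := by
    intro lam
    have h := phiBaux_shape s m TM O hTMO lam 0 0
    simpa [topOf_zero] using h
  have cancel : ∀ (A X Y : Finset ι), Disjoint X A → Disjoint Y A → A ∪ X = A ∪ Y → X = Y := by
    intro A X Y hX hY h
    ext w
    constructor <;> intro hw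
    · rcases mem_union.mp (h ▸ mem_union_right A hw) with h' | h'
      · exact absurd hw (disjoint_right.mp hX h')
      · exact h'
    · rcases mem_union.mp (h ▸ mem_union_right A hw : w ∈ A ∪ X) with h' | h'
      · exact absurd hw (disjoint_right.mp hY h')
      · exact h'
  constructor
  · rintro q q₁ A hq ⟨j₁, hj₁⟩ ⟨j, hj⟩ ⟨lam₀, hA₀⟩ -
    have hA : A = topOf s ((lam₀.map fun q : ℕ => ⌈m * (q : ℝ)⌉₊).sum) TM ∪
        topOf s ((lam₀.map fun q : ℕ => (q - ⌈m * (q : ℝ)⌉₊ : ℕ)).sum) O := by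
      rw [hA₀, hphiB, shape0]
    set a := (lam₀.map fun q : ℕ => ⌈m * (q : ℝ)⌉₊).sum
    set b := (lam₀.map fun q : ℕ => (q - ⌈m * (q : ℝ)⌉₊ : ℕ)).sum
    have hj1q : j₁ ≤ q₁ := by
      have h1 : m * (q₁ : ℝ) ≤ q₁ := mul_le_of_le_one_left (Nat.cast_nonneg q₁) hm1
      rw [hj₁] at h1; exact_mod_cast h1
    have hjq : j ≤ q := by
      have h1 : m * (q : ℝ) ≤ q := mul_le_of_le_one_left (Nat.cast_nonneg q) hm1
      rw [hj] at h1; exact_mod_cast h1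
    have hj1j : j₁ ≤ j := by
      have h1 : m * (q₁ : ℝ) ≤ m * q :=
        mul_le_mul_of_nonneg_left (Nat.cast_le.mpr hq) hm0
      rw [hj₁, hj] at h1; exact_mod_cast h1
    have hnat : j + q₁ ≤ q + j₁ := by
      have hc : (q₁ : ℝ) ≤ q := Nat.cast_le.mpr hq
      have h1 : m * ((q : ℝ) - q₁) ≤ (q : ℝ) - q₁ :=
        mul_le_of_le_one_left (sub_nonneg.mpr hc) hm1
      rw [mul_sub, hj, hj₁] at h1
      have h2 : (j : ℝ) + q₁ ≤ (q : ℝ) + j₁ := by linarith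
      exact_mod_cast h2
    have hcq : ⌈m * (q : ℝ)⌉₊ = j := by rw [hj, Nat.ceil_natCast]
    have hcq₁ : ⌈m * (q₁ : ℝ)⌉₊ = j₁ := by rw [hj₁, Nat.ceil_natCast]
    have hcqd : ⌈m * (((q - q₁ : ℕ) : ℕ) : ℝ)⌉₊ = j - j₁ := by
      have h1 : (((q - q₁ : ℕ) : ℕ) : ℝ) = (q : ℝ) - q₁ := by
        push_cast [Nat.cast_sub hq]; ring
      rw [h1, mul_sub, hj, hj₁, ← Nat.cast_sub hj1j, Nat.ceil_natCast]
    rw [hphiB, hphiB]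
    refine cancel A _ _ (phiBaux_disjoint s m TM O [q] A) (phiBaux_disjoint s m TM O [q₁, q - q₁] A) ?_
    rw [hA]
    rw [phiBaux_shape s m TM O hTMO [q] a b, phiBaux_shape s m TM O hTMO [q₁, q - q₁] a b]
    simp only [List.map_cons, List.map_nil, List.sum_cons, List.sum_nil, hcq, hcq₁, hcqd]
    congr 2 <;> omega
  · intro lam hint hsum
    have sums : ∀ L : List ℕ, (∀ q ∈ L, ∃ j : ℕ, m * (q : ℝ) = (j : ℝ)) →
        m * (L.sum : ℝ) = (((L.map fun q : ℕ => ⌈m * (q : ℝ)⌉₊).sum : ℕ) : ℝ) ∧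
        ((L.map fun q : ℕ => ⌈m * (q : ℝ)⌉₊).sum +
          (L.map fun q : ℕ => (q - ⌈m * (q : ℝ)⌉₊ : ℕ)).sum = L.sum) := by
      intro L
      induction L with
      | nil => intro _; simp
      | cons q rest ih =>
        intro hL
        obtain ⟨j, hjq⟩ := hL q List.mem_cons_self
        have hrest := ih fun r hr => hL r (List.mem_cons_of_mem _ hr)
        have hcj : ⌈m * (q : ℝ)⌉₊ = j := by rw [hjq, Nat.ceil_natCast]
        have hjle : j ≤ q := by
          have h1 : m * (q : ℝ) ≤ q := mul_le_of_le_one_left (Nat.cast_nonneg q) hm1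
          rw [hjq] at h1; exact_mod_cast h1
        constructor
        · simp only [List.map_cons, List.sum_cons, hcj]
          rw [Nat.cast_add, Nat.cast_add, mul_add, hjq, hrest.1]
        · simp only [List.map_cons, List.sum_cons, hcj]
          have h2 := hrest.2
          omega
    obtain ⟨hmn, hFG⟩ := sums lam hint
    set F := (lam.map fun q : ℕ => ⌈m * (q : ℝ)⌉₊).sum with hF
    set G := (lam.map fun q : ℕ => (q - ⌈m * (q : ℝ)⌉₊ : ℕ)).sum with hG
    set n := lam.sum with hn
    have hFk : F ≤ ⌈m * (k : ℝ)⌉₊ := by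
      have h1 : m * (n : ℝ) ≤ m * k :=
        mul_le_mul_of_nonneg_left (Nat.cast_le.mpr hsum) hm0
      have h2 : (F : ℝ) ≤ (⌈m * (k : ℝ)⌉₊ : ℝ) := by
        rw [← hmn]; exact h1.trans (Nat.le_ceil _)
      exact_mod_cast h2
    have hTMcard : TM.card = ⌈m * (k : ℝ)⌉₊ := card_topOf _ _ _ hMk
    have hFTM : (topOf s F TM).card = F := card_topOf _ _ _ (by rw [hTMcard]; exact hFk)
    have hH : phiB W M s m k ∅ lam = topOf s F TM ∪ topOf s G O := by
      rw [hphiB, shape0]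
    unfold RespectsRightsSet
    refine Or.inl ⟨?_, ?_⟩
    · rw [hmn]
      exact_mod_cast hFk.trans hMk
    · rw [hH]
      have hsubM : topOf s F TM ⊆ (topOf s F TM ∪ topOf s G O) ∩ M := by
        intro w hw
        refine mem_inter.mpr ⟨mem_union_left _ hw, ?_⟩
        have : w ∈ TM := topOf_subset _ _ _ hw
        rw [hTM] at this
        exact topOf_subset _ _ _ this
      have hωge : (F : ℝ) ≤ (((topOf s F TM ∪ topOf s G O) ∩ M).card : ℝ) := by
        exact_mod_cast hFTM ▸ card_le_card hsubM
      have hcard_le : (topOf s F TM ∪ topOf s G O).card ≤ n := by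
        calc (topOf s F TM ∪ topOf s G O).card
            ≤ (topOf s F TM).card + (topOf s G O).card := card_union_le _ _
          _ ≤ F + G := Nat.add_le_add (topOf_card_le _ _ _) (topOf_card_le _ _ _)
          _ = n := hFG
      calc m * (((topOf s F TM ∪ topOf s G O).card : ℕ) : ℝ)
          ≤ m * (n : ℝ) := mul_le_mul_of_nonneg_left (Nat.cast_le.mpr hcard_le) hm0
        _ = (F : ℝ) := hmn
        _ ≤ _ := hωge
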